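/- For integers n ≥ 1, p ≥ 1 and any real z with -1 ≤ z ≤ 1, ((-1)^{n+p-1}/((n-1)! p!)) ∫₀¹ (log t)^{n-1} (log(1-zt))^p / t dt = ∑_{j₁ > j₂ > ⋯ > j_p ≥ 1} z^{j₁}/(j₁^{n+1} j₂ ⋯ j_p), where the integral converges absolutely and the series converges. -/

import Mathlib

open Real MeasureTheory Finset

/-- Truncated multiple zeta value `ζ_r({1}_k)`. -/
noncomputable def zt1 : ℕ → ℕ → ℝ
  | _, 0 => 1
  | r, k + 1 => ∑ n ∈ Finset.Icc 1 r, (1 / (n : ℝ)) * zt1 (n - 1) k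

lemma zt1_zero_right (r : ℕ) : zt1 r 0 = 1 := rfl

lemma zt1_succ (r k : ℕ) : zt1 r (k+1) = ∑ n ∈ Finset.Icc 1 r, (1 / (n : ℝ)) * zt1 (n - 1) k := rfl

lemma zt1_zero_left (k : ℕ) (hk : k ≠ 0) : zt1 0 k = 0 := by
  cases k with
  | zero => exact absurd rfl hk
  | succ k => simp [zt1_succ]

lemma zt1_nonneg (k r : ℕ) : 0 ≤ zt1 r k := by
  induction k generalizing r with
  | zero => rw [zt1_zero_right]; norm_num
  | succ k ih =>
    rw [zt1_succ]
    exact Finset.sum_nonneg fun n _ => mul_nonneg (by positivity) (ih _)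

lemma zt1_succ_sub (r k : ℕ) :
    zt1 (r+1) (k+1) = zt1 r (k+1) + (1 / (r+1 : ℝ)) * zt1 r k := by
  rw [zt1_succ, zt1_succ r, Finset.sum_Icc_succ_top (by omega : 1 ≤ r+1)]
  push_cast
  ring

/-- coefficients of `(-log(1-x))^p / p!`. -/
noncomputable def wc (p j : ℕ) : ℝ :=
  if p = 0 then (if j = 0 then 1 else 0)
  else if j = 0 then 0 else zt1 (j-1) (p-1) / j

lemma wc_nonneg (p j : ℕ) : 0 ≤ wc p j := by
  unfold wc
  split <;> split
  · norm_num
  · norm_num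
  · norm_num
  · exact div_nonneg (zt1_nonneg _ _) (Nat.cast_nonneg _)

lemma wc_one (j : ℕ) (hj : j ≠ 0) : wc 1 j = 1 / j := by
  simp [wc, hj, zt1_zero_right]

lemma wc_succ (q j : ℕ) : wc (q+1) (j+1) = zt1 j q / (j+1) := by
  simp [wc]

open PowerSeries in
lemma coeff_derivFun (f : ℝ⟦X⟧) (n : ℕ) :
    coeff n f.derivativeFun = coeff (n + 1) f * (n + 1) := coeff_derivative f n

open PowerSeries in
noncomputable def Lps : ℝ⟦X⟧ := PowerSeries.mk fun j => wc 1 j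

open PowerSeries in
lemma onem_mul_dL : (1 - X) * Lps.derivativeFun = 1 := by
  ext n
  rw [sub_mul, one_mul, map_sub]
  cases n with
  | zero =>
    rw [coeff_zero_X_mul, coeff_derivFun, Lps, coeff_mk]
    simp [wc_one]
  | succ n =>
    have h1 : wc 1 (n + 1 + 1) = 1 / (n + 1 + 1 : ℕ) := wc_one _ (by omega)
    have h2 : wc 1 (n + 1) = 1 / (n + 1 : ℕ) := wc_one _ (by omega)
    rw [coeff_succ_X_mul, coeff_derivFun, coeff_derivFun, Lps, coeff_mk, coeff_mk,
      h1, h2]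
    push_cast
    have : (n:ℝ) + 1 ≠ 0 := by positivity
    have : (n:ℝ) + 1 + 1 ≠ 0 := by positivity
    field_simp
    simp [coeff_one]

open PowerSeries in
lemma onem_mul_dLpow (p : ℕ) :
    (1 - X) * (Lps ^ (p+1)).derivativeFun = C ((p:ℝ)+1) * Lps ^ p := by
  induction p with
  | zero =>
    rw [zero_add, pow_one, onem_mul_dL, pow_zero, mul_one]
    norm_num
  | succ p ih =>
    have hsplit : Lps ^ (p+2) = Lps ^ (p+1) * Lps := by ring
    rw [hsplit, derivativeFun_mul, smul_eq_mul, smul_eq_mul, mul_add]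
    have h1 : (1 - X) * (Lps ^ (p+1) * Lps.derivativeFun)
        = Lps ^ (p+1) * ((1 - X) * Lps.derivativeFun) := by ring
    have h2 : (1 - X) * (Lps * (Lps ^ (p+1)).derivativeFun)
        = Lps * ((1 - X) * (Lps ^ (p+1)).derivativeFun) := by ring
    rw [h1, h2, onem_mul_dL, ih, mul_one]
    have hC : C ((p:ℝ) + 1 + 1) = C ((p:ℝ)+1) + 1 := by rw [map_add, map_one]
    push_cast
    rw [hC]
    ring

open PowerSeries in
lemma coeff_Lpow (j p : ℕ) : coeff j (Lps ^ p) = p.factorial * wc p j := by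
  induction j generalizing p with
  | zero =>
    rw [coeff_zero_eq_constantCoeff, map_pow]
    have : constantCoeff Lps = 0 := by simp [Lps, wc, constantCoeff_mk]
    rw [this]
    cases p with
    | zero => simp [wc]
    | succ p => simp [wc, zero_pow (Nat.succ_ne_zero p)]
  | succ j ih =>
    cases p with
    | zero =>
      simp [wc, coeff_one]
    | succ q =>
      have hkey := congrArg (coeff (R := ℝ) j) (onem_mul_dLpow q)
      rw [sub_mul, one_mul, map_sub, coeff_C_mul] at hkey
      have hD : ∀ m, coeff m (Lps ^ (q+1)).derivativeFun
          = coeff (m+1) (Lps ^ (q+1)) * (m+1) := fun m => coeff_derivFun _ m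
      have hrec : coeff (j+1) (Lps ^ (q+1)) * ((j:ℝ)+1)
          - (if j = 0 then 0 else coeff j (Lps ^ (q+1)) * (j:ℝ))
          = ((q:ℝ)+1) * coeff j (Lps ^ q) := by
        cases j with
        | zero =>
          rw [coeff_zero_X_mul] at hkey
          simpa [hD 0] using hkey
        | succ i =>
          rw [coeff_succ_X_mul] at hkey
          rw [hD (i+1), hD i] at hkey
          simp only [if_neg (Nat.succ_ne_zero i)]
          push_cast at hkey ⊢
          linarith [hkey]
      have hcast : ((j:ℝ) + 1) ≠ 0 := by positivity
      have hwc : ((j:ℝ)+1) * (((q+1).factorial : ℝ) * wc (q+1) (j+1))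
          = ((q:ℝ)+1) * ((q.factorial : ℝ) * wc q j)
            + (if j = 0 then 0 else ((q+1).factorial : ℝ) * wc (q+1) j * (j:ℝ)) := by
        rw [wc_succ]
        have hfac : ((q+1).factorial : ℝ) = ((q:ℝ)+1) * q.factorial := by
          rw [Nat.factorial_succ]; push_cast; ring
        cases j with
        | zero =>
          simp only [if_pos rfl, Nat.cast_zero, zero_add, add_zero]
          cases q with
          | zero => simp [wc, zt1_zero_right]
          | succ r =>
            rw [zt1_zero_left (r+1) (by omega)]
            simp [wc]
        | succ i =>
          simp only [if_neg (Nat.succ_ne_zero i)]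
          have key : zt1 (i+1) q = wc q (i+1) + zt1 i q := by
            cases q with
            | zero => simp [zt1_zero_right, wc]
            | succ r =>
              rw [zt1_succ_sub, wc_succ]
              push_cast
              ring
          rw [key, wc_succ, hfac]
          have h1 : ((i:ℝ)+1) ≠ 0 := by positivity
          have h2 : ((i:ℝ)+1+1) ≠ 0 := by positivity
          push_cast
          field_simp
      rw [ih q, ih (q+1)] at hrec
      have hA : coeff (j+1) (Lps ^ (q+1)) * ((j:ℝ)+1)
          = (((q+1).factorial : ℝ) * wc (q+1) (j+1)) * ((j:ℝ)+1) := by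
        linear_combination hrec - hwc
      exact mul_right_cancel₀ hcast hA

open PowerSeries in
lemma wc_conv (q j : ℕ) :
    ((q:ℝ) + 1) * wc (q+1) j = ∑ kl ∈ Finset.HasAntidiagonal.antidiagonal j, wc 1 kl.1 * wc q kl.2 := by
  have h := coeff_Lpow j (q+1)
  rw [pow_succ, mul_comm (Lps ^ q) Lps, coeff_mul] at h
  have hsum : ∑ kl ∈ Finset.HasAntidiagonal.antidiagonal j, coeff kl.1 Lps * coeff kl.2 (Lps ^ q)
      = ∑ kl ∈ Finset.HasAntidiagonal.antidiagonal j, wc 1 kl.1 * ((q.factorial : ℝ) * wc q kl.2) := by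
    refine Finset.sum_congr rfl fun kl _ => ?_
    rw [coeff_Lpow, Lps, coeff_mk]
  rw [hsum] at h
  have hfac : ((q+1).factorial : ℝ) = ((q:ℝ)+1) * q.factorial := by
    rw [Nat.factorial_succ]; push_cast; ring
  have hq : (q.factorial : ℝ) ≠ 0 := Nat.cast_ne_zero.mpr q.factorial_ne_zero
  apply mul_right_cancel₀ hq
  rw [Finset.sum_mul]
  calc ((q:ℝ)+1) * wc (q+1) j * q.factorial
      = ((q+1).factorial : ℝ) * wc (q+1) j := by rw [hfac]; ring
    _ = _ := by
        rw [← h]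
        exact Finset.sum_congr rfl fun kl _ => by ring

lemma hasSum_wc_one {x : ℝ} (h : |x| < 1) :
    HasSum (fun j : ℕ => wc 1 j * x ^ j) (-Real.log (1-x)) := by
  have hmain := Real.hasSum_pow_div_log_of_abs_lt_one h
  have h1 : (fun n : ℕ => wc 1 (n+1) * x^(n+1)) = fun n : ℕ => x^(n+1)/(n+1) := by
    funext n
    rw [wc_one _ (Nat.succ_ne_zero n)]
    push_cast
    ring
  have h2 := (hasSum_nat_add_iff (f := fun j : ℕ => wc 1 j * x ^ j) 1).mp (by rw [h1]; exact hmain)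
  simpa [wc] using h2

lemma norm_wc_term (p j : ℕ) (x : ℝ) : ‖wc p j * x ^ j‖ = wc p j * |x| ^ j := by
  rw [norm_mul, norm_pow, Real.norm_eq_abs, Real.norm_eq_abs, abs_of_nonneg (wc_nonneg p j)]

lemma summable_norm_wc (p : ℕ) {x : ℝ} (h : |x| < 1) :
    ∀ (hs : ∀ y : ℝ, |y| < 1 → HasSum (fun j : ℕ => wc p j * y ^ j)
      ((-Real.log (1-y))^p / p.factorial)),
    Summable fun j : ℕ => ‖wc p j * x ^ j‖ := by
  intro hs
  have habs : |(|x|)| < 1 := by rwa [abs_abs]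
  refine ((hs |x| habs).summable).congr fun j => (norm_wc_term p j x).symm

lemma hasSum_wc (p : ℕ) : ∀ x : ℝ, |x| < 1 →
    HasSum (fun j : ℕ => wc p j * x ^ j) ((-Real.log (1-x))^p / p.factorial) := by
  induction p with
  | zero =>
    intro x h
    have h0 : ∀ j : ℕ, j ≠ 0 → wc 0 j * x ^ j = 0 := by
      intro j hj; simp [wc, hj]
    simpa [wc] using hasSum_single (f := fun j : ℕ => wc 0 j * x ^ j) 0 (fun b hb => h0 b hb)
  | succ p ih =>
    intro x h
    have hone : ∀ y : ℝ, |y| < 1 → HasSum (fun j : ℕ => wc 1 j * y ^ j)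
        ((-Real.log (1-y))^1 / (1:ℕ).factorial) := by
      intro y hy
      simpa using hasSum_wc_one hy
    have hf : Summable fun j : ℕ => ‖wc 1 j * x ^ j‖ := summable_norm_wc 1 h hone
    have hg : Summable fun j : ℕ => ‖wc p j * x ^ j‖ := summable_norm_wc p h ih
    have hconv : Summable fun j : ℕ =>
        ∑ kl ∈ Finset.HasAntidiagonal.antidiagonal j, (wc 1 kl.1 * x ^ kl.1) * (wc p kl.2 * x ^ kl.2) :=
      (summable_norm_sum_mul_antidiagonal_of_summable_norm hf hg).of_norm
    have htsum := tsum_mul_tsum_eq_tsum_sum_antidiagonal_of_summable_norm hf hg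
    rw [(hasSum_wc_one h).tsum_eq, (ih x h).tsum_eq] at htsum
    have hconv_eq : ∀ j : ℕ,
        ∑ kl ∈ Finset.HasAntidiagonal.antidiagonal j, (wc 1 kl.1 * x ^ kl.1) * (wc p kl.2 * x ^ kl.2)
        = ((p:ℝ)+1) * (wc (p+1) j * x ^ j) := by
      intro j
      rw [mul_comm ((p:ℝ)+1) _]
      rw [show wc (p+1) j * x ^ j * ((p:ℝ)+1) = (((p:ℝ)+1) * wc (p+1) j) * x ^ j from by ring,
        wc_conv, Finset.sum_mul]
      refine Finset.sum_congr rfl fun kl hkl => ?_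
      have : kl.1 + kl.2 = j := Finset.HasAntidiagonal.mem_antidiagonal.mp hkl
      rw [← this, pow_add]
      ring
    have hval : -Real.log (1-x) * ((-Real.log (1-x))^p / p.factorial)
        = ((p:ℝ)+1) * ((-Real.log (1-x))^(p+1) / (p+1).factorial) := by
      have : ((p+1).factorial : ℝ) = ((p:ℝ)+1) * p.factorial := by
        rw [Nat.factorial_succ]; push_cast; ring
      rw [this]
      have hp0 : (p.factorial : ℝ) ≠ 0 := Nat.cast_ne_zero.mpr p.factorial_ne_zero
      have hp1 : ((p:ℝ)+1) ≠ 0 := by positivity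
      field_simp
      ring
    have hS : HasSum (fun j : ℕ => ((p:ℝ)+1) * (wc (p+1) j * x ^ j))
        (((p:ℝ)+1) * ((-Real.log (1-x))^(p+1) / (p+1).factorial)) := by
      have hthis := hconv.hasSum
      have hfun : (fun j : ℕ => ∑ kl ∈ Finset.HasAntidiagonal.antidiagonal j,
          (wc 1 kl.1 * x ^ kl.1) * (wc p kl.2 * x ^ kl.2))
          = fun j : ℕ => ((p:ℝ)+1) * (wc (p+1) j * x ^ j) := funext hconv_eq
      rw [hfun] at hthis
      rw [hfun] at htsum
      rw [← htsum, hval] at hthis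
      exact hthis
    have hp1 : ((p:ℝ)+1) ≠ 0 := by positivity
    exact (hasSum_mul_left_iff hp1).mp hS

lemma tendsto_pow_mul_log_pow_zero (j i : ℕ) (hj : 1 ≤ j) :
    Filter.Tendsto (fun t : ℝ => t^j * Real.log t ^ i) (nhdsWithin 0 (Set.Ioi 0)) (nhds 0) := by
  rcases Nat.eq_zero_or_pos i with hi | hi
  · subst hi
    simp only [pow_zero, mul_one]
    have : Filter.Tendsto (fun t : ℝ => t^j) (nhds 0) (nhds 0) := by
      have := (continuous_pow j).tendsto (0:ℝ)
      simpa [zero_pow (by omega : j ≠ 0)] using this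
    exact this.mono_left nhdsWithin_le_nhds
  · have hbase := tendsto_log_mul_rpow_nhdsGT_zero
      (show (0:ℝ) < (j:ℝ)/(i:ℝ) by positivity)
    have hpow : Filter.Tendsto (fun u : ℝ => u ^ i) (nhds 0) (nhds 0) := by
      have := (continuous_pow i).tendsto (0:ℝ)
      simpa [zero_pow (by omega : i ≠ 0)] using this
    have hcomp := hpow.comp hbase
    refine hcomp.congr' ?_
    filter_upwards [self_mem_nhdsWithin] with t ht
    have ht0 : (0:ℝ) < t := ht
    simp only [Function.comp_apply]
    rw [mul_pow, ← Real.rpow_natCast (t ^ ((j:ℝ)/(i:ℝ))) i, ← Real.rpow_mul ht0.le,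
      div_mul_cancel₀ _ (by positivity : (i:ℝ) ≠ 0), Real.rpow_natCast]
    ring

lemma abs_pow_log_le (k m : ℕ) {t : ℝ} (ht : t ∈ Set.Ioc (0:ℝ) 1) :
    ‖t^k * Real.log t ^ m‖ ≤ (2*(m:ℝ)+2)^m * t ^ (-(1/2) : ℝ) := by
  obtain ⟨ht0, ht1⟩ := ht
  set ε : ℝ := 1/(2*(m:ℝ)+2) with hε
  have hε0 : 0 < ε := by positivity
  have hlog : |Real.log t| = Real.log t⁻¹ := by
    rw [Real.log_inv, abs_of_nonpos (Real.log_nonpos ht0.le ht1)]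
  have h1 : Real.log t⁻¹ ≤ (t⁻¹) ^ ε / ε :=
    Real.log_le_rpow_div (by positivity) hε0
  have h2 : ‖t^k * Real.log t ^ m‖ ≤ |Real.log t| ^ m := by
    rw [norm_mul, norm_pow, norm_pow, Real.norm_eq_abs, Real.norm_eq_abs]
    have : |t| ^ k ≤ 1 := by
      rw [abs_of_pos ht0]
      exact pow_le_one₀ ht0.le ht1
    nlinarith [pow_nonneg (abs_nonneg (Real.log t)) m, this,
      pow_nonneg (abs_nonneg t) k]
  have h3 : |Real.log t| ^ m ≤ ((t⁻¹) ^ ε / ε) ^ m := by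
    rw [hlog]
    exact pow_le_pow_left₀ (Real.log_nonneg (one_le_inv_iff₀.mpr ⟨ht0, ht1⟩)) h1 m
  have h4 : ((t⁻¹) ^ ε / ε) ^ m = (1/ε)^m * t ^ (-(ε * m)) := by
    rw [div_pow, ← Real.rpow_natCast ((t⁻¹) ^ ε) m, ← Real.rpow_mul (by positivity),
      Real.inv_rpow ht0.le, ← Real.rpow_neg ht0.le]
    ring
  have h5 : t ^ (-(ε * m)) ≤ t ^ (-(1/2) : ℝ) := by
    apply Real.rpow_le_rpow_of_exponent_ge ht0 ht1
    have : ε * m ≤ 1/2 := by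
      rw [hε]
      rw [div_mul_eq_mul_div, one_mul, div_le_div_iff₀ (by positivity) (by norm_num)]
      nlinarith [Nat.cast_nonneg (α := ℝ) m]
    linarith
  have h6 : (1/ε)^m = (2*(m:ℝ)+2)^m := by rw [hε]; norm_num
  calc ‖t^k * Real.log t ^ m‖ ≤ ((t⁻¹) ^ ε / ε) ^ m := le_trans h2 h3
    _ = (1/ε)^m * t ^ (-(ε * m)) := h4
    _ ≤ (2*(m:ℝ)+2)^m * t ^ (-(1/2) : ℝ) := by
        rw [← h6]
        have : (0:ℝ) ≤ (1/ε)^m := by positivity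
        exact mul_le_mul_of_nonneg_left h5 this

lemma integrableOn_pow_log (k m : ℕ) :
    IntegrableOn (fun t : ℝ => t^k * Real.log t ^ m) (Set.Ioc 0 1) := by
  have hbound : IntegrableOn (fun t : ℝ => (2*(m:ℝ)+2)^m * t ^ (-(1/2) : ℝ)) (Set.Ioc 0 1) := by
    have h := (intervalIntegral.intervalIntegrable_rpow' (a := 0) (b := 1)
      (by norm_num : (-1:ℝ) < -(1/2))).1
    exact h.const_mul _
  refine Integrable.mono' hbound ?_ ?_
  · refine (ContinuousOn.aestronglyMeasurable ?_ measurableSet_Ioc)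
    exact ((continuous_pow k).continuousOn).mul
      ((Real.continuousOn_log.mono (fun t ht => ne_of_gt ht.1)).pow m)
  · exact (ae_restrict_iff' measurableSet_Ioc).mpr
      (Filter.Eventually.of_forall fun t ht => abs_pow_log_le k m ht)

lemma integral_pow_log (k m : ℕ) :
    ∫ t in Set.Ioo (0:ℝ) 1, t^k * Real.log t ^ m
      = (-1:ℝ)^m * m.factorial / ((k:ℝ)+1)^(m+1) := by
  induction m with
  | zero =>
    simp only [pow_zero, mul_one, one_mul]
    rw [← MeasureTheory.integral_Ioc_eq_integral_Ioo,
      ← intervalIntegral.integral_of_le (by norm_num : (0:ℝ) ≤ 1)]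
    rw [integral_pow]
    simp [Nat.factorial]
  | succ m ih =>
    -- FTC on H t = t^(k+1) * log t ^ (m+1)
    have hderiv : ∀ t ∈ Set.Ioo (0:ℝ) 1, HasDerivAt (fun t : ℝ => t^(k+1) * Real.log t ^ (m+1))
        (((k:ℝ)+1) * (t^k * Real.log t ^ (m+1)) + ((m:ℝ)+1) * (t^k * Real.log t ^ m)) t := by
      intro t ht
      have ht0 : t ≠ 0 := ne_of_gt ht.1
      have h1 : HasDerivAt (fun t : ℝ => t^(k+1)) (((k:ℝ)+1) * t^k) t := by
        simpa using hasDerivAt_pow (k+1) t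
      have h2 : HasDerivAt (fun t : ℝ => Real.log t ^ (m+1))
          (((m:ℝ)+1) * Real.log t ^ m * t⁻¹) t := by
        have hl := Real.hasDerivAt_log ht0
        have := (hl.fun_pow (m+1))
        simpa using this
      have := h1.mul h2
      refine this.congr_deriv ?_
      have htk : t^(k+1) * t⁻¹ = t^k := by rw [pow_succ, mul_assoc, mul_inv_cancel₀ ht0, mul_one]
      linear_combination (((m:ℝ)+1) * Real.log t ^ m) * htk
    have hIoo : ∀ f : ℝ → ℝ, ∫ t in Set.Ioo (0:ℝ) 1, f t = ∫ t in (0:ℝ)..1, f t := fun f => by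
      rw [intervalIntegral.integral_of_le (by norm_num : (0:ℝ) ≤ 1),
        MeasureTheory.integral_Ioc_eq_integral_Ioo]
    have hint1 : IntervalIntegrable (fun t : ℝ => t^k * Real.log t ^ (m+1)) volume 0 1 := by
      rw [intervalIntegrable_iff_integrableOn_Ioc_of_le (by norm_num : (0:ℝ) ≤ 1)]
      exact integrableOn_pow_log k (m+1)
    have hint0 : IntervalIntegrable (fun t : ℝ => t^k * Real.log t ^ m) volume 0 1 := by
      rw [intervalIntegrable_iff_integrableOn_Ioc_of_le (by norm_num : (0:ℝ) ≤ 1)]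
      exact integrableOn_pow_log k m
    have hint : IntervalIntegrable (fun t : ℝ =>
        ((k:ℝ)+1) * (t^k * Real.log t ^ (m+1)) + ((m:ℝ)+1) * (t^k * Real.log t ^ m))
        volume 0 1 := (hint1.const_mul _).add (hint0.const_mul _)
    have ha : Filter.Tendsto (fun t : ℝ => t^(k+1) * Real.log t ^ (m+1))
        (nhdsWithin 0 (Set.Ioi 0)) (nhds 0) :=
      tendsto_pow_mul_log_pow_zero (k+1) (m+1) (by omega)
    have hb : Filter.Tendsto (fun t : ℝ => t^(k+1) * Real.log t ^ (m+1))
        (nhdsWithin 1 (Set.Iio 1)) (nhds 0) := by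
      have hcont : ContinuousAt (fun t : ℝ => t^(k+1) * Real.log t ^ (m+1)) 1 :=
        ((continuous_pow (k+1)).continuousAt).mul
          ((Real.continuousAt_log (by norm_num)).pow (m+1))
      have := hcont.tendsto
      simp only [Real.log_one, one_pow, zero_pow (Nat.succ_ne_zero m), mul_zero] at this
      exact this.mono_left nhdsWithin_le_nhds
    have hFTC := intervalIntegral.integral_eq_sub_of_hasDerivAt_of_tendsto
      (by norm_num : (0:ℝ) < 1) hderiv hint ha hb
    rw [sub_zero, intervalIntegral.integral_add (hint1.const_mul _) (hint0.const_mul _),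
      intervalIntegral.integral_const_mul, intervalIntegral.integral_const_mul] at hFTC
    rw [← hIoo, ← hIoo, ih] at hFTC
    have hk : ((k:ℝ)+1) ≠ 0 := by positivity
    have hI1 : ∫ t in Set.Ioo (0:ℝ) 1, t^k * Real.log t ^ (m+1)
        = -(((m:ℝ)+1) * ((-1:ℝ)^m * m.factorial / ((k:ℝ)+1)^(m+1))) / ((k:ℝ)+1) := by
      field_simp at hFTC ⊢
      linarith [hFTC]
    rw [hI1]
    have hfac : ((m+1).factorial : ℝ) = ((m:ℝ)+1) * m.factorial := by
      rw [Nat.factorial_succ]; push_cast; ring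
    rw [hfac]
    field_simp
    ring

lemma harmonic_mono : Monotone harmonic := by
  refine monotone_nat_of_le_succ fun n => ?_
  rw [harmonic_succ]
  have : (0:ℚ) ≤ (↑(n+1))⁻¹ := by positivity
  linarith

lemma zt1_le_harmonic (k r : ℕ) : zt1 r k ≤ ((harmonic r : ℚ) : ℝ)^k := by
  induction k generalizing r with
  | zero => simp [zt1_zero_right]
  | succ k ih =>
    rw [zt1_succ]
    have hcast : ((harmonic r : ℚ) : ℝ) = ∑ i ∈ Finset.Icc 1 r, (1 / (i:ℝ)) := by
      rw [harmonic_eq_sum_Icc]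
      push_cast
      simp [one_div]
    calc ∑ m ∈ Finset.Icc 1 r, (1 / (m:ℝ)) * zt1 (m-1) k
        ≤ ∑ m ∈ Finset.Icc 1 r, (1 / (m:ℝ)) * ((harmonic r : ℚ) : ℝ)^k := by
          refine Finset.sum_le_sum fun m hm => ?_
          have hm1 : 1 ≤ m := (Finset.mem_Icc.mp hm).1
          have hmr : m ≤ r := (Finset.mem_Icc.mp hm).2
          refine mul_le_mul_of_nonneg_left ?_ (by positivity)
          refine le_trans (ih (m-1)) ?_
          have hh : harmonic (m-1) ≤ harmonic r := harmonic_mono (by omega)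
          have h0 : (0:ℚ) ≤ harmonic (m-1) := by
            rcases Nat.eq_zero_or_pos (m-1) with h | h
            · rw [h, harmonic_zero]
            · exact (harmonic_pos (by omega)).le
          have := pow_le_pow_left₀ (by exact_mod_cast h0) (by exact_mod_cast hh) k
          exact_mod_cast this
        _ = ((harmonic r : ℚ) : ℝ)^(k+1) := by
          rw [← Finset.sum_mul, ← hcast, pow_succ]
          ring

lemma zt1_le_rpow (p : ℕ) (hp : 1 ≤ p) (j : ℕ) (hj : 1 ≤ j) :
    zt1 (j-1) (p-1) ≤ (2*(p:ℝ)+1)^(p-1) * (j:ℝ)^((1/2):ℝ) := by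
  have hj1 : (1:ℝ) ≤ (j:ℝ) := by exact_mod_cast hj
  have hj0 : (0:ℝ) < (j:ℝ) := by linarith
  set ε : ℝ := 1/(2*(p:ℝ)) with hε
  have hp1 : (1:ℝ) ≤ (p:ℝ) := by exact_mod_cast hp
  have hε0 : 0 < ε := by positivity
  -- harmonic bound
  have h1 : zt1 (j-1) (p-1) ≤ ((harmonic j : ℚ) : ℝ)^(p-1) := by
    refine le_trans (zt1_le_harmonic (p-1) (j-1)) ?_
    have hh : harmonic (j-1) ≤ harmonic j := harmonic_mono (by omega)
    have h0 : (0:ℚ) ≤ harmonic (j-1) := by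
      rcases Nat.eq_zero_or_pos (j-1) with h | h
      · rw [h, harmonic_zero]
      · exact (harmonic_pos (by omega)).le
    have := pow_le_pow_left₀ (show (0:ℝ) ≤ ((harmonic (j-1) : ℚ) : ℝ) from by exact_mod_cast h0)
      (show ((harmonic (j-1) : ℚ) : ℝ) ≤ ((harmonic j : ℚ) : ℝ) from by exact_mod_cast hh) (p-1)
    exact_mod_cast this
  have h2 : ((harmonic j : ℚ) : ℝ) ≤ 1 + Real.log j := harmonic_le_one_add_log j
  have h3 : 1 + Real.log j ≤ (2*(p:ℝ)+1) * (j:ℝ)^ε := by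
    have hlog : Real.log j ≤ (j:ℝ)^ε / ε := Real.log_le_rpow_div hj0.le hε0
    have hdiv : (j:ℝ)^ε / ε = 2*(p:ℝ) * (j:ℝ)^ε := by
      rw [hε]
      field_simp
    have hone : (1:ℝ) ≤ (j:ℝ)^ε := Real.one_le_rpow hj1 hε0.le
    nlinarith [Real.rpow_nonneg hj0.le ε]
  have h4 : ((harmonic j : ℚ) : ℝ)^(p-1) ≤ ((2*(p:ℝ)+1) * (j:ℝ)^ε)^(p-1) := by
    refine pow_le_pow_left₀ ?_ (le_trans h2 h3) (p-1)
    have : (0:ℚ) ≤ harmonic j := (harmonic_pos (by omega)).le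
    exact_mod_cast this
  have h5 : ((2*(p:ℝ)+1) * (j:ℝ)^ε)^(p-1)
      = (2*(p:ℝ)+1)^(p-1) * (j:ℝ)^(ε * ((p-1:ℕ):ℝ)) := by
    rw [mul_pow, ← Real.rpow_natCast ((j:ℝ)^ε) (p-1), ← Real.rpow_mul hj0.le]
  have h6 : (j:ℝ)^(ε * ((p-1:ℕ):ℝ)) ≤ (j:ℝ)^((1/2):ℝ) := by
    refine Real.rpow_le_rpow_of_exponent_le hj1 ?_
    rw [hε]
    rw [div_mul_eq_mul_div, one_mul, div_le_div_iff₀ (by positivity) (by norm_num)]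
    push_cast [Nat.cast_sub hp]
    nlinarith [hp1]
  calc zt1 (j-1) (p-1) ≤ ((harmonic j : ℚ) : ℝ)^(p-1) := h1
    _ ≤ (2*(p:ℝ)+1)^(p-1) * (j:ℝ)^(ε * ((p-1:ℕ):ℝ)) := by rw [← h5]; exact h4
    _ ≤ (2*(p:ℝ)+1)^(p-1) * (j:ℝ)^((1/2):ℝ) :=
        mul_le_mul_of_nonneg_left h6 (by positivity)

lemma summable_wc_div (p n : ℕ) (hp : 1 ≤ p) (hn : 1 ≤ n) :
    Summable (fun j : ℕ => wc p j / (j:ℝ)^n) := by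
  set C : ℝ := (2*(p:ℝ)+1)^(p-1) with hC
  have hC0 : 0 ≤ C := by positivity
  have hbound : ∀ j : ℕ, wc p j / (j:ℝ)^n ≤ C * (j:ℝ)^(-(3/2) : ℝ) := by
    intro j
    rcases Nat.eq_zero_or_pos j with h | h
    · subst h
      have h0 : wc p 0 = 0 := by simp [wc, Nat.one_le_iff_ne_zero.mp hp]
      rw [h0, zero_div]
      have : ((0:ℕ):ℝ)^(-(3/2) : ℝ) = 0 := by
        rw [Nat.cast_zero, Real.zero_rpow (by norm_num : (-(3/2):ℝ) ≠ 0)]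
      rw [this, mul_zero]
    · have hj1 : (1:ℝ) ≤ (j:ℝ) := by exact_mod_cast h
      have hj0 : (0:ℝ) < (j:ℝ) := by linarith
      have hwc : wc p j = zt1 (j-1) (p-1) / j := by
        obtain ⟨q, rfl⟩ : ∃ q, p = q + 1 := ⟨p-1, by omega⟩
        obtain ⟨i, rfl⟩ : ∃ i, j = i + 1 := ⟨j-1, by omega⟩
        rw [wc_succ]
        push_cast
        simp
      rw [hwc]
      have hnum := zt1_le_rpow p hp j h
      have hden : (j:ℝ)^2 ≤ (j:ℝ) * (j:ℝ)^n := by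
        calc (j:ℝ)^2 = (j:ℝ) * (j:ℝ)^1 := by ring
          _ ≤ (j:ℝ) * (j:ℝ)^n := by
              refine mul_le_mul_of_nonneg_left (pow_le_pow_right₀ hj1 hn) hj0.le
      have hA : zt1 (j-1) (p-1) / j / (j:ℝ)^n = zt1 (j-1) (p-1) / ((j:ℝ) * (j:ℝ)^n) := by
        rw [div_div]
      rw [hA]
      calc zt1 (j-1) (p-1) / ((j:ℝ) * (j:ℝ)^n)
          ≤ (C * (j:ℝ)^((1/2):ℝ)) / (j:ℝ)^2 := by
            refine div_le_div₀ (by positivity) hnum (by positivity) hden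
        _ = C * (j:ℝ)^(-(3/2) : ℝ) := by
            rw [mul_div_assoc]
            congr 1
            rw [show ((j:ℝ)^2 : ℝ) = (j:ℝ)^((2:ℕ):ℝ) from (Real.rpow_natCast _ 2).symm,
              ← Real.rpow_sub hj0]
            norm_num
  have hsum : Summable (fun j : ℕ => C * (j:ℝ)^(-(3/2) : ℝ)) := by
    refine Summable.mul_left C ?_
    rw [Real.summable_nat_rpow]
    norm_num
  refine Summable.of_nonneg_of_le (fun j => ?_) hbound hsum
  exact div_nonneg (wc_nonneg p j) (by positivity)

/-- For integers `n ≥ 1`, `p ≥ 1` and any real `z` with `-1 ≤ z ≤ 1`,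
`((-1)^{n+p-1}/((n-1)! p!)) ∫₀¹ (log t)^{n-1} (log(1-zt))^p / t dt
  = ∑_{j₁ > j₂ > ⋯ > j_p ≥ 1} z^{j₁}/(j₁^{n+1} j₂ ⋯ j_p)`,
where the integral converges absolutely and the series converges.
The series over strictly decreasing `p`-tuples is written as the iterated sum
`∑_{j₁ ≥ 1} z^{j₁} ζ_{j₁-1}({1}_{p-1}) / j₁^{n+1}`. -/
theorem stmt7 (n p : ℕ) (hn : 1 ≤ n) (hp : 1 ≤ p) (z : ℝ) (hz1 : -1 ≤ z) (hz2 : z ≤ 1) :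
    MeasureTheory.IntegrableOn
      (fun t : ℝ => Real.log t ^ (n - 1) * Real.log (1 - z * t) ^ p / t) (Set.Ioo 0 1) ∧
    Summable (fun j : ℕ+ => z ^ (j : ℕ) / (j : ℝ) ^ (n + 1) * zt1 ((j : ℕ) - 1) (p - 1)) ∧
    ((-1 : ℝ) ^ (n + p - 1) / ((Nat.factorial (n - 1) : ℝ) * (Nat.factorial p : ℝ))) *
        ∫ t in (0:ℝ)..1, Real.log t ^ (n - 1) * Real.log (1 - z * t) ^ p / t =
      ∑' j : ℕ+, z ^ (j : ℕ) / (j : ℝ) ^ (n + 1) * zt1 ((j : ℕ) - 1) (p - 1) := by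
  obtain ⟨N, rfl⟩ : ∃ N, n = N + 1 := ⟨n-1, by omega⟩
  simp only [Nat.add_sub_cancel] at *
  have hz : |z| ≤ 1 := abs_le.mpr ⟨hz1, hz2⟩
  set f : ℝ → ℝ := fun t => Real.log t ^ N * Real.log (1 - z * t) ^ p / t with hfdef
  set c : ℕ → ℝ := fun j => (p.factorial : ℝ) * (-1)^p * wc p j * z^j with hcdef
  set F : ℕ → ℝ → ℝ := fun j t => c j * (t^(j-1) * Real.log t ^ N) with hFdef
  have hc0 : c 0 = 0 := by
    simp [hcdef, wc, Nat.one_le_iff_ne_zero.mp hp]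
  have hcabs : ∀ j, |c j| = (p.factorial : ℝ) * wc p j * |z|^j := by
    intro j
    rw [hcdef]
    rw [abs_mul, abs_mul, abs_mul, abs_pow, abs_pow, abs_neg, abs_one, one_pow, mul_one,
      abs_of_nonneg (wc_nonneg p j), Nat.abs_cast]
  -- pointwise expansion
  have hzt : ∀ t : ℝ, t ∈ Set.Ioo (0:ℝ) 1 → |z*t| < 1 := by
    intro t ht
    rw [abs_mul]
    have := ht.1
    have := ht.2
    have h1 : |t| = t := abs_of_pos ht.1
    nlinarith [abs_nonneg z]
  have hpt : ∀ t : ℝ, t ∈ Set.Ioo (0:ℝ) 1 → HasSum (fun j => F j t) (f t) := by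
    intro t ht
    have ht0 : (0:ℝ) < t := ht.1
    have hsum := (hasSum_wc p (z*t) (hzt t ht)).mul_left
      ((p.factorial : ℝ) * (-1)^p * Real.log t ^ N / t)
    have hterm : ∀ j : ℕ, ((p.factorial : ℝ) * (-1)^p * Real.log t ^ N / t)
        * (wc p j * (z*t)^j) = F j t := by
      intro j
      rcases Nat.eq_zero_or_pos j with rfl | hj
      · rw [hFdef]
        simp [hc0, wc, Nat.one_le_iff_ne_zero.mp hp]
      · obtain ⟨i, rfl⟩ : ∃ i, j = i + 1 := ⟨j-1, by omega⟩
        rw [hFdef, hcdef]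
        simp only [Nat.add_sub_cancel]
        rw [mul_pow]
        field_simp
        ring
    have hval : ((p.factorial : ℝ) * (-1)^p * Real.log t ^ N / t)
        * ((-Real.log (1-z*t))^p / p.factorial) = f t := by
      rw [hfdef]
      have hfp : (p.factorial : ℝ) ≠ 0 := Nat.cast_ne_zero.mpr p.factorial_ne_zero
      have hneg : (-Real.log (1-z*t))^p = (-1)^p * Real.log (1-z*t)^p := by
        rw [neg_pow]
      rw [hneg]
      have hsq : ((-1:ℝ))^p * ((-1:ℝ))^p = 1 := by
        rw [← pow_add, Even.neg_one_pow ⟨p, by ring⟩]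
      calc ((p.factorial:ℝ) * (-1:ℝ)^p * Real.log t ^ N / t)
            * ((-1:ℝ)^p * Real.log (1-z*t)^p / (p.factorial:ℝ))
          = ((-1:ℝ)^p * (-1:ℝ)^p) * ((p.factorial:ℝ) / (p.factorial:ℝ))
            * (Real.log t ^ N * Real.log (1-z*t)^p / t) := by ring
        _ = Real.log t ^ N * Real.log (1-z*t)^p / t := by
            rw [hsq, div_self hfp]; ring
    rw [funext hterm, hval] at hsum
    exact hsum
  -- integrability of each term
  have hFint : ∀ j : ℕ, IntegrableOn (F j) (Set.Ioo (0:ℝ) 1) := by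
    intro j
    exact (((integrableOn_pow_log (j-1) N).mono_set Set.Ioo_subset_Ioc_self).const_mul (c j))
  -- integral of norms
  have hFnorm : ∀ j : ℕ, (∫ t in Set.Ioo (0:ℝ) 1, ‖F j t‖)
      = |c j| * ((N.factorial : ℝ) / (((j-1:ℕ):ℝ)+1)^(N+1)) := by
    intro j
    have hcongr : ∀ t ∈ Set.Ioo (0:ℝ) 1,
        ‖F j t‖ = (|c j| * (-1:ℝ)^N) * (t^(j-1) * Real.log t ^ N) := by
      intro t ht
      have ht0 : (0:ℝ) < t := ht.1
      have hlt : Real.log t ≤ 0 := Real.log_nonpos ht0.le ht.2.le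
      have h1 : |t ^ (j-1) * Real.log t ^ N| = (-1:ℝ)^N * (t^(j-1) * Real.log t ^ N) := by
        rw [abs_mul, abs_pow, abs_pow, abs_of_pos ht0, abs_of_nonpos hlt]
        ring
      calc ‖F j t‖ = |c j| * |t ^ (j-1) * Real.log t ^ N| := by
            simp only [hFdef, Real.norm_eq_abs, abs_mul]
        _ = (|c j| * (-1:ℝ)^N) * (t^(j-1) * Real.log t ^ N) := by rw [h1]; ring
    rw [MeasureTheory.setIntegral_congr_fun measurableSet_Ioo hcongr,
      MeasureTheory.integral_const_mul, integral_pow_log]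
    have hsq : ((-1:ℝ))^N * ((-1:ℝ))^N = 1 := by
      rw [← pow_add, Even.neg_one_pow ⟨N, by ring⟩]
    calc |c j| * (-1:ℝ)^N * ((-1:ℝ)^N * (N.factorial:ℝ) / (((j-1:ℕ):ℝ)+1)^(N+1))
        = ((-1:ℝ)^N * (-1:ℝ)^N) * (|c j| * ((N.factorial:ℝ) / (((j-1:ℕ):ℝ)+1)^(N+1))) := by
          ring
      _ = |c j| * ((N.factorial:ℝ) / (((j-1:ℕ):ℝ)+1)^(N+1)) := by rw [hsq, one_mul]
  -- summability of integrals of norms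
  have hnorm_summ : Summable (fun j : ℕ => ∫ t in Set.Ioo (0:ℝ) 1, ‖F j t‖) := by
    have hb : Summable (fun j : ℕ =>
        ((p.factorial : ℝ) * N.factorial) * (wc p j / (j:ℝ)^(N+1))) :=
      (summable_wc_div p (N+1) hp (by omega)).mul_left _
    refine Summable.of_nonneg_of_le (fun j => ?_) (fun j => ?_) hb
    · exact MeasureTheory.integral_nonneg fun t => norm_nonneg _
    · rw [hFnorm j]
      rcases Nat.eq_zero_or_pos j with rfl | hj
      · rw [hc0]
        simp [wc, Nat.one_le_iff_ne_zero.mp hp]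
      · have hj1 : (((j-1:ℕ):ℝ)+1) = (j:ℝ) := by
          have : 1 ≤ j := hj
          push_cast [Nat.cast_sub this]
          ring
        rw [hj1, hcabs]
        have hz1' : |z|^j ≤ 1 := pow_le_one₀ (abs_nonneg z) hz
        have hwcnn : (0:ℝ) ≤ (p.factorial:ℝ) * wc p j :=
          mul_nonneg (Nat.cast_nonneg _) (wc_nonneg p j)
        have step : (p.factorial:ℝ) * wc p j * |z|^j ≤ (p.factorial:ℝ) * wc p j :=
          mul_le_of_le_one_right hwcnn hz1'
        calc (p.factorial:ℝ) * wc p j * |z|^j * ((N.factorial:ℝ)/(j:ℝ)^(N+1))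
            ≤ ((p.factorial:ℝ) * wc p j) * ((N.factorial:ℝ)/(j:ℝ)^(N+1)) :=
              mul_le_mul_of_nonneg_right step (by positivity)
          _ = (p.factorial:ℝ) * (N.factorial:ℝ) * (wc p j / (j:ℝ)^(N+1)) := by ring
  -- exchange sum and integral
  have hkey := MeasureTheory.hasSum_integral_of_summable_integral_norm
    (μ := volume.restrict (Set.Ioo (0:ℝ) 1)) (F := F) hFint hnorm_summ
  have htsum_f : ∫ t in Set.Ioo (0:ℝ) 1, (∑' j, F j t) = ∫ t in Set.Ioo (0:ℝ) 1, f t := by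
    refine MeasureTheory.setIntegral_congr_fun measurableSet_Ioo fun t ht => ?_
    exact (hpt t ht).tsum_eq
  rw [htsum_f] at hkey
  -- integrability of f (Part 1)
  have hmeas : AEStronglyMeasurable f (volume.restrict (Set.Ioo (0:ℝ) 1)) := by
    refine ContinuousOn.aestronglyMeasurable ?_ measurableSet_Ioo
    have h1z : ∀ t ∈ Set.Ioo (0:ℝ) 1, 1 - z * t ≠ 0 := by
      intro t ht
      have := hzt t ht
      have := abs_lt.mp this
      intro hcontra
      have : z * t = 1 := by linarith
      linarith [this ▸ (abs_lt.mp (hzt t ht)).2]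
    refine ContinuousOn.div ?_ continuousOn_id (fun t ht => ne_of_gt ht.1)
    refine ContinuousOn.mul ?_ ?_
    · exact (Real.continuousOn_log.mono fun t ht => ne_of_gt ht.1).pow N
    · refine (ContinuousOn.pow ?_ p)
      refine Real.continuousOn_log.comp ((continuous_const.sub
        (continuous_const.mul continuous_id)).continuousOn) ?_
      intro t ht
      exact h1z t ht
  have hf_int : IntegrableOn f (Set.Ioo (0:ℝ) 1) := by
    refine ⟨hmeas, ?_⟩
    rw [MeasureTheory.hasFiniteIntegral_iff_norm]
    -- pointwise bound by tsum of norms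
    have hsummable_norm : ∀ t ∈ Set.Ioo (0:ℝ) 1, Summable (fun j : ℕ => ‖F j t‖) := by
      intro t ht
      have ht0 : (0:ℝ) < t := ht.1
      have habs : |t| < 1 := by rw [abs_of_pos ht0]; exact ht.2
      have hsum := (hasSum_wc p t habs).summable.mul_left
        ((p.factorial : ℝ) * |Real.log t| ^ N / t)
      refine Summable.of_nonneg_of_le (fun j => norm_nonneg _) (fun j => ?_) hsum
      simp only [hFdef, norm_mul, norm_pow, Real.norm_eq_abs]
      have hzj : |z|^j ≤ 1 := pow_le_one₀ (abs_nonneg z) hz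
      have htj : |t|^(j-1) ≤ t^j / t := by
        rw [abs_of_pos ht0]
        rcases Nat.eq_zero_or_pos j with rfl | hj
        · simp only [Nat.zero_sub, pow_zero]
          rw [le_div_iff₀ ht0, one_mul]
          exact ht.2.le
        · obtain ⟨i, rfl⟩ : ∃ i, j = i + 1 := ⟨j-1, by omega⟩
          simp only [Nat.add_sub_cancel]
          rw [pow_succ, mul_div_assoc, div_self (ne_of_gt ht0), mul_one]
      have hlogn : (0:ℝ) ≤ |Real.log t|^N := by positivity
      have hwcnn : (0:ℝ) ≤ (p.factorial : ℝ) * wc p j :=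
        mul_nonneg (Nat.cast_nonneg _) (wc_nonneg p j)
      calc |c j| * (|t|^(j-1) * |Real.log t|^N)
          = ((p.factorial:ℝ) * wc p j) * (|z|^j * (|t|^(j-1) * |Real.log t|^N)) := by
            rw [hcabs]; ring
        _ ≤ ((p.factorial:ℝ) * wc p j) * (1 * ((t^j/t) * |Real.log t|^N)) := by
            refine mul_le_mul_of_nonneg_left ?_ hwcnn
            refine mul_le_mul hzj ?_ (by positivity) (by norm_num)
            exact mul_le_mul_of_nonneg_right htj hlogn
        _ = (p.factorial:ℝ) * |Real.log t| ^ N / t * (wc p j * t^j) := by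
            field_simp
    have hb1 : ∀ t ∈ Set.Ioo (0:ℝ) 1,
        ENNReal.ofReal ‖f t‖ ≤ ∑' j : ℕ, ENNReal.ofReal ‖F j t‖ := by
      intro t ht
      have h1 : ‖f t‖ ≤ ∑' j : ℕ, ‖F j t‖ := by
        rw [← (hpt t ht).tsum_eq]
        exact norm_tsum_le_tsum_norm (hsummable_norm t ht)
      refine le_trans (ENNReal.ofReal_le_ofReal h1) ?_
      rw [ENNReal.ofReal_tsum_of_nonneg (fun j => norm_nonneg _) (hsummable_norm t ht)]
    have hmeasFj : ∀ j : ℕ, AEMeasurable (fun t => ENNReal.ofReal ‖F j t‖)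
        (volume.restrict (Set.Ioo (0:ℝ) 1)) :=
      fun j => ((hFint j).norm.aestronglyMeasurable.aemeasurable).ennreal_ofReal
    calc ∫⁻ t in Set.Ioo (0:ℝ) 1, ENNReal.ofReal ‖f t‖
        ≤ ∫⁻ t in Set.Ioo (0:ℝ) 1, ∑' j : ℕ, ENNReal.ofReal ‖F j t‖ := by
          refine MeasureTheory.lintegral_mono_ae ?_
          rw [MeasureTheory.ae_restrict_iff' measurableSet_Ioo]
          exact Filter.Eventually.of_forall hb1
      _ = ∑' j : ℕ, ∫⁻ t in Set.Ioo (0:ℝ) 1, ENNReal.ofReal ‖F j t‖ :=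
          MeasureTheory.lintegral_tsum hmeasFj
      _ = ∑' j : ℕ, ENNReal.ofReal (∫ t in Set.Ioo (0:ℝ) 1, ‖F j t‖) := by
          refine tsum_congr fun j => ?_
          rw [MeasureTheory.ofReal_integral_eq_lintegral_ofReal (hFint j).norm
            (Filter.Eventually.of_forall fun t => norm_nonneg _)]
      _ = ENNReal.ofReal (∑' j : ℕ, ∫ t in Set.Ioo (0:ℝ) 1, ‖F j t‖) :=
          (ENNReal.ofReal_tsum_of_nonneg
            (fun j => MeasureTheory.integral_nonneg fun t => norm_nonneg _) hnorm_summ).symm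
      _ < ⊤ := ENNReal.ofReal_lt_top
  -- value of each integral
  have hIntF : ∀ j : ℕ, (∫ t in Set.Ioo (0:ℝ) 1, F j t)
      = c j * ((-1:ℝ)^N * (N.factorial:ℝ) / ((((j-1:ℕ)):ℝ)+1)^(N+1)) := by
    intro j
    simp only [hFdef]
    rw [MeasureTheory.integral_const_mul, integral_pow_log]
  set K : ℝ := (-1:ℝ)^(N+p) / ((N.factorial : ℝ) * (p.factorial:ℝ)) with hK
  set T : ℕ → ℝ := fun j => z^j / (j:ℝ)^(N+1+1) * zt1 (j-1) (p-1) with hT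
  have hKT : ∀ j : ℕ, K * ∫ t in Set.Ioo (0:ℝ) 1, F j t = T j := by
    intro j
    rw [hIntF j]
    rcases Nat.eq_zero_or_pos j with rfl | hj
    · rw [hc0]
      simp [hT, zero_pow (show N+1+1 ≠ 0 by omega)]
    · obtain ⟨i, rfl⟩ : ∃ i, j = i+1 := ⟨j-1, by omega⟩
      obtain ⟨q, rfl⟩ : ∃ q, p = q+1 := ⟨p-1, by omega⟩
      simp only [hT, hK, hcdef, Nat.add_sub_cancel]
      rw [wc_succ]
      have hsign : (-1:ℝ)^(N+(q+1)) * ((-1:ℝ)^(q+1) * (-1:ℝ)^N) = 1 := by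
        rw [← pow_add, ← pow_add]
        exact Even.neg_one_pow ⟨N+(q+1), by ring⟩
      have hNf : ((N.factorial:ℝ)) ≠ 0 := Nat.cast_ne_zero.mpr N.factorial_ne_zero
      have hpf : (((q+1).factorial:ℝ)) ≠ 0 := Nat.cast_ne_zero.mpr (q+1).factorial_ne_zero
      have hi1 : ((i:ℝ)+1) ≠ 0 := by positivity
      have hcast : (((i+1:ℕ)):ℝ) = (i:ℝ)+1 := by push_cast; ring
      rw [hcast]
      field_simp
      linear_combination zt1 i q * z^(i+1)
        * ((i:ℝ)+1)^(N+1+1) * hsign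
  have hHasT : HasSum T (K * ∫ t in Set.Ioo (0:ℝ) 1, f t) := by
    have h := hkey.mul_left K
    rwa [funext hKT] at h
  have hvanish : ∀ x : ℕ, x ∉ Set.range ((↑) : ℕ+ → ℕ) → T x = 0 := by
    intro x hx
    rcases Nat.eq_zero_or_pos x with rfl | hxp
    · simp [hT, zero_pow (show N+1+1 ≠ 0 by omega)]
    · exact absurd ⟨⟨x, hxp⟩, rfl⟩ hx
  have hPNat : HasSum (fun j : ℕ+ => T (j:ℕ)) (K * ∫ t in Set.Ioo (0:ℝ) 1, f t) :=
    (Function.Injective.hasSum_iff (fun a b h => PNat.coe_injective h) hvanish).mpr hHasT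
  have hfun_eq : (fun j : ℕ+ => z ^ (j : ℕ) / (j : ℝ) ^ (N+1+1) * zt1 ((j : ℕ) - 1) (p - 1))
      = fun j : ℕ+ => T (j:ℕ) := by
    funext j
    simp only [hT]
  refine ⟨hf_int, ?_, ?_⟩
  · rw [hfun_eq]
    exact hPNat.summable
  · rw [hfun_eq, hPNat.tsum_eq]
    have hexp : N + 1 + p - 1 = N + p := by omega
    rw [hexp]
    rw [intervalIntegral.integral_of_le (by norm_num : (0:ℝ) ≤ 1),
      MeasureTheory.integral_Ioc_eq_integral_Ioo]
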